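/- Let d ≥ 1 and let ω : Fin d → ℝ be injective. Let A^{x'|x}_{y'|y} ∈ ℂ (for x,x',y,y' ∈ Fin d) be coefficients such that the Choi-type matrix J indexed by pairs, J_{(x',x),(y',y)} := A^{x'|x}_{y'|y}, is positive semidefinite, and A^{x'|x}_{y'|y} = 0 whenever ω_{x'} − ω_x ≠ ω_{y'} − ω_y. Write A_{x'|x} := A^{x'|x}_{x'|x} (a nonnegative real), define L_{x'|x} := A_{x'|x} for x' ≠ x and L_{x|x} := −Σ_{z≠x} A_{z|x}, and set γ_{x'y'} := (|L_{x'|x'}| + |L_{y'|y'}|)/2. Suppose ρ : ℝ → Matrix (Fin d) (Fin d) ℂ is differentiable and satisfies, for all t and all x',y', the covariant Lindblad equation dρ_{x'y'}/dt = Σ_{(x,y) : ω_x − ω_y = ω_{x'} − ω_{y'}} [ A^{x'|x}_{y'|y} − (1/2)·Σ_z (A_{z|x} + A_{z|y})·δ_{x x'} δ_{y y'} ] ρ_{xy}. Let ρ̃ : ℝ → (Fin d × Fin d → ℝ) be differentiable and satisfy dρ̃_{x'y'}/dt = −γ_{x'y'} ρ̃_{x'y'} + Σ_{(x,y) : ω_x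 − ω_y = ω_{x'} − ω_{y'}, x ≠ x', y ≠ y'} √(L_{x'|x} L_{y'|y}) · ρ̃_{xy}, with initial condition ρ̃_{x'y'}(0) = |ρ_{x'y'}(0)|. Then |ρ_{x'y'}(t)| ≤ ρ̃_{x'y'}(t) for all t ≥ 0 and all x', y'. (Minimal decoherence theorem, Theorem 1.) -/

import Mathlib

open Matrix Finset
open scoped ComplexOrder

lemma star_pi_single {n : Type*} [DecidableEq n] (a : n) (x : ℂ) :
    star (Pi.single a x : n → ℂ) = Pi.single a (star x) := by
  ext i
  by_cases hia : i = a <;> simp [Pi.single_apply, hia]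

lemma psd_diag {n : Type*} [Fintype n] [DecidableEq n] {J : Matrix n n ℂ}
    (h : J.PosSemidef) (a : n) : 0 ≤ (J a a).re ∧ (J a a).im = 0 := by
  have h2 := h.dotProduct_mulVec_nonneg (Pi.single a 1)
  have e : star (Pi.single a (1:ℂ)) ⬝ᵥ (J *ᵥ Pi.single a 1) = J a a := by
    rw [Matrix.mulVec_single, star_pi_single]
    simp [single_dotProduct]
  rw [e, Complex.le_def] at h2
  exact ⟨h2.1, h2.2.symm⟩

lemma psd_entry_sq_le {n : Type*} [Fintype n] [DecidableEq n] {J : Matrix n n ℂ}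
    (h : J.PosSemidef) (a b : n) :
    ‖J a b‖ ^ 2 ≤ (J a a).re * (J b b).re := by
  have hda := psd_diag h a
  have hdb := psd_diag h b
  rcases eq_or_ne a b with rfl | hab
  · have : ‖J a a‖ = (J a a).re := by
      rw [Complex.norm_def, Complex.normSq_apply, hda.2]
      simp [Real.sqrt_mul_self hda.1]
    rw [this, sq]
  · have hba : J b a = (starRingEnd ℂ) (J a b) := by
      have h1 := h.1
      rw [Matrix.IsHermitian] at h1
      have := congrFun (congrFun h1 b) a
      simpa [Matrix.conjTranspose_apply] using this.symm
    set q := J a b with hq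
    have habs : q * (starRingEnd ℂ) q = ((‖q‖ : ℝ) : ℂ) ^ 2 := by
      rw [Complex.mul_conj]
      norm_cast
      exact (Complex.sq_norm q).symm
    have key : ∀ t : ℝ, 0 ≤ (J a a).re * (t * t) + (-2 * ‖q‖ ^ 2) * t
        + ‖q‖ ^ 2 * (J b b).re := by
      intro t
      have h2 := h.dotProduct_mulVec_nonneg (Pi.single a (t : ℂ) + Pi.single b (-(starRingEnd ℂ) q))
      have e : star (Pi.single a (t : ℂ) + Pi.single b (-(starRingEnd ℂ) q)) ⬝ᵥ
          (J *ᵥ (Pi.single a (t : ℂ) + Pi.single b (-(starRingEnd ℂ) q)))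
          = ((t^2 : ℝ) : ℂ) * J a a - ((2*t*(‖q‖^2) : ℝ) : ℂ)
            + ((‖q‖^2 : ℝ) : ℂ) * J b b := by
        rw [Matrix.mulVec_add, Matrix.mulVec_single, Matrix.mulVec_single, star_add,
          star_pi_single, star_pi_single]
        simp only [dotProduct_add, add_dotProduct, single_dotProduct, Pi.smul_apply,
          Matrix.col_apply, op_smul_eq_mul]
        rw [hba]
        simp only [star_neg, Complex.star_def, Complex.conj_conj, Complex.conj_ofReal]
        push_cast
        linear_combination (J b b - 2*(t:ℂ)) * habs
      rw [e, Complex.le_def] at h2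
      have h3 := h2.1
      simp only [Complex.add_re, Complex.sub_re, Complex.zero_re,
        Complex.ofReal_re, Complex.re_ofReal_mul] at h3
      nlinarith [h3]
    have hd := discrim_le_zero key
    rw [discrim] at hd
    by_contra hcon
    push_neg at hcon
    have hr : 0 < ‖q‖ ^ 2 := lt_of_le_of_lt (mul_nonneg hda.1 hdb.1) hcon
    nlinarith [hd, hr, hcon]

lemma continuous_finset_sup' {ι : Type*} {s : Finset ι} (hs : s.Nonempty)
    {f : ι → ℝ → ℝ} (hf : ∀ i, Continuous (f i)) :
    Continuous fun t => s.sup' hs fun i => f i t := by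
  induction hs using Finset.Nonempty.cons_induction with
  | singleton a => simpa using hf a
  | cons a s ha hs ih =>
    have e : (fun t => (Finset.cons a s ha).sup' (Finset.cons_nonempty ha) fun i => f i t)
        = fun t => max (f a t) (s.sup' hs fun i => f i t) :=
      funext fun t => Finset.sup'_cons hs _
    rw [e]
    exact (hf a).max ih

/-- **Minimal decoherence theorem (Theorem 1).** For a time-translation covariant
Markovian (Lindblad) evolution with population transfer rate matrix `L`, the magnitude of
every coherence element `ρ_{x'y'}(t)` is bounded by the solution `ρ̃_{x'y'}(t)` of the
optimal damping-and-transport equation. -/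
theorem minimal_decoherence
    (d : ℕ) (hd : 1 ≤ d) (ω : Fin d → ℝ) (hω : Function.Injective ω)
    (A : Fin d → Fin d → Fin d → Fin d → ℂ)
    (J : Matrix (Fin d × Fin d) (Fin d × Fin d) ℂ)
    (hJ : ∀ x' x y' y, J (x', x) (y', y) = A x' x y' y)
    (hPSD : J.PosSemidef)
    (hcov : ∀ x' x y' y, ω x' - ω x ≠ ω y' - ω y → A x' x y' y = 0)
    (L : Fin d → Fin d → ℝ)
    (hL : ∀ x' x, L x' x =
      if x' = x then -∑ z ∈ Finset.univ.filter (fun z => z ≠ x), (A z x z x).re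
      else (A x' x x' x).re)
    (γ : Fin d → Fin d → ℝ)
    (hγ : ∀ x' y', γ x' y' = (|L x' x'| + |L y' y'|) / 2)
    (ρ : ℝ → Matrix (Fin d) (Fin d) ℂ)
    (hρ : ∀ t x' y', HasDerivAt (fun s => ρ s x' y')
      (∑ p ∈ Finset.univ.filter
          (fun p : Fin d × Fin d => ω p.1 - ω p.2 = ω x' - ω y'),
        (A x' p.1 y' p.2
          - (1 / 2) * (∑ z, (A z p.1 z p.1 + A z p.2 z p.2))
            * (if p.1 = x' ∧ p.2 = y' then 1 else 0)) * ρ t p.1 p.2) t)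
    (ρt : ℝ → Fin d × Fin d → ℝ)
    (hρt : ∀ t x' y', HasDerivAt (fun s => ρt s (x', y'))
      (-γ x' y' * ρt t (x', y')
        + ∑ p ∈ Finset.univ.filter
            (fun p : Fin d × Fin d =>
              ω p.1 - ω p.2 = ω x' - ω y' ∧ p.1 ≠ x' ∧ p.2 ≠ y'),
          Real.sqrt (L x' p.1 * L y' p.2) * ρt t p) t)
    (h0 : ∀ x' y', ρt 0 (x', y') = ‖ρ 0 x' y'‖) :
    ∀ t ≥ (0 : ℝ), ∀ x' y', ‖ρ t x' y'‖ ≤ ρt t (x', y') := by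
  classical
  have hFinNe : Nonempty (Fin d) := ⟨⟨0, hd⟩⟩
  have hne : (univ : Finset (Fin d × Fin d)).Nonempty := univ_nonempty
  -- basic positivity facts from PSD
  have hdiagJ : ∀ x' x : Fin d, 0 ≤ (A x' x x' x).re := by
    intro x' x
    have := (psd_diag hPSD (x', x)).1
    rwa [hJ] at this
  have hLoff : ∀ x' x : Fin d, x' ≠ x → L x' x = (A x' x x' x).re := by
    intro x' x h; rw [hL]; simp [h]
  have habsL : ∀ x : Fin d,
      |L x x| = ∑ z ∈ univ.filter (fun z => z ≠ x), (A z x z x).re := by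
    intro x
    rw [hL, if_pos rfl]
    rw [abs_neg, abs_of_nonneg (Finset.sum_nonneg fun z _ => hdiagJ z x)]
  have hγ0 : ∀ x' y', 0 ≤ γ x' y' := by
    intro x' y'; rw [hγ]; positivity
  have hoffb : ∀ x' x y' y : Fin d, x' ≠ x → y' ≠ y →
      ‖A x' x y' y‖ ≤ Real.sqrt (L x' x * L y' y) := by
    intro x' x y' y hx hy
    have h2 := psd_entry_sq_le hPSD (x', x) (y', y)
    rw [hJ, hJ, hJ] at h2
    rw [hLoff _ _ hx, hLoff _ _ hy]
    calc ‖A x' x y' y‖ = Real.sqrt (‖A x' x y' y‖ ^ 2) :=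
          (Real.sqrt_sq (norm_nonneg _)).symm
      _ ≤ _ := Real.sqrt_le_sqrt h2
  -- diagonal coefficient bound
  have hcd : ∀ x' y' : Fin d,
      (A x' x' y' y' - (1/2) * (∑ z, (A z x' z x' + A z y' z y'))).re ≤ -γ x' y' := by
    intro x' y'
    have h2 := psd_entry_sq_le hPSD (x', x') (y', y')
    rw [hJ, hJ, hJ] at h2
    have h3 := Complex.re_le_norm (A x' x' y' y')
    have h4 : (A x' x' y' y').re ≤ ((A x' x' x' x').re + (A y' y' y' y').re) / 2 := by
      nlinarith [norm_nonneg (A x' x' y' y'), hdiagJ x' x', hdiagJ y' y',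
        sq_nonneg ((A x' x' x' x').re - (A y' y' y' y').re)]
    have h12 : ((1:ℂ)/2) = ((1/2 : ℝ) : ℂ) := by norm_num
    have hsum : ((1/2 : ℂ) * (∑ z, (A z x' z x' + A z y' z y'))).re
        = (1/2) * ((∑ z, (A z x' z x').re) + (∑ z, (A z y' z y').re)) := by
      rw [h12, Complex.re_ofReal_mul, Complex.re_sum]
      simp [Complex.add_re, Finset.sum_add_distrib]
    have hsplit1 : (∑ z, (A z x' z x').re)
        = (A x' x' x' x').re + ∑ z ∈ univ.filter (fun z => z ≠ x'), (A z x' z x').re := by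
      rw [Finset.filter_ne']
      exact (Finset.add_sum_erase _ _ (mem_univ x')).symm
    have hsplit2 : (∑ z, (A z y' z y').re)
        = (A y' y' y' y').re + ∑ z ∈ univ.filter (fun z => z ≠ y'), (A z y' z y').re := by
      rw [Finset.filter_ne']
      exact (Finset.add_sum_erase _ _ (mem_univ y')).symm
    rw [Complex.sub_re, hsum, hγ, habsL, habsL, hsplit1, hsplit2]
    linarith
  -- the off-diagonal index set
  set Soff : Fin d → Fin d → Finset (Fin d × Fin d) := fun x' y' =>
    univ.filter (fun p : Fin d × Fin d =>
      ω p.1 - ω p.2 = ω x' - ω y' ∧ p.1 ≠ x' ∧ p.2 ≠ y') with hSoffdef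
  have hsplitS : ∀ x' y' : Fin d,
      univ.filter (fun p : Fin d × Fin d => ω p.1 - ω p.2 = ω x' - ω y')
        = insert (x', y') (Soff x' y') := by
    intro x' y'
    ext p
    simp only [hSoffdef, mem_filter, mem_insert, mem_univ, true_and]
    constructor
    · intro hp
      rcases eq_or_ne p.1 x' with h1 | h1
      · left
        have h2 : ω p.2 = ω y' := by rw [h1] at hp; linarith
        have h3 := hω h2
        exact Prod.ext h1 h3
      · right
        refine ⟨hp, h1, fun h2 => h1 ?_⟩
        apply hω
        rw [h2] at hp
        linarith
    · rintro (rfl | ⟨h, _, _⟩)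
      · rfl
      · exact h
  have hnm : ∀ x' y' : Fin d, (x', y') ∉ Soff x' y' := by
    intro x' y'
    simp [hSoffdef]
  -- restated derivative of ρ
  have hρ' : ∀ t x' y', HasDerivAt (fun s => ρ s x' y')
      ((A x' x' y' y' - (1/2) * (∑ z, (A z x' z x' + A z y' z y'))) * ρ t x' y'
        + ∑ p ∈ Soff x' y', A x' p.1 y' p.2 * ρ t p.1 p.2) t := by
    intro t x' y'
    have h := hρ t x' y'
    rw [hsplitS x' y', Finset.sum_insert (hnm x' y')] at h
    have e : ∀ p ∈ Soff x' y',
        (A x' p.1 y' p.2 - 1/2 * (∑ z, (A z p.1 z p.1 + A z p.2 z p.2))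
          * (if p.1 = x' ∧ p.2 = y' then 1 else 0)) * ρ t p.1 p.2
        = A x' p.1 y' p.2 * ρ t p.1 p.2 := by
      intro p hp
      simp only [hSoffdef, mem_filter] at hp
      rw [if_neg (by tauto), mul_zero, sub_zero]
    rw [Finset.sum_congr rfl e, if_pos ⟨rfl, rfl⟩, mul_one] at h
    exact h
  -- continuity
  have hρc : ∀ x' y', Continuous fun s => ρ s x' y' := fun x' y' =>
    continuous_iff_continuousAt.2 fun s => (hρ s x' y').continuousAt
  have hρtc : ∀ p : Fin d × Fin d, Continuous fun s => ρt s p := by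
    intro p
    refine continuous_iff_continuousAt.2 fun s => ?_
    have := (hρt s p.1 p.2).continuousAt
    simpa only [Prod.mk.eta] using this
  -- the comparison functions
  set W : ℝ → Fin d × Fin d → ℝ :=
    fun t p => ‖ρ t p.1 p.2‖ - ρt t p with hWdef
  have hWc : ∀ p, Continuous fun t => W t p := fun p =>
    (continuous_norm.comp (hρc p.1 p.2)).sub (hρtc p)
  set m : ℝ → ℝ := fun t => univ.sup' hne (fun i => W t i) with hmdef
  have hmc : Continuous m := continuous_finset_sup' hne hWc
  have hWm : ∀ t p, W t p ≤ m t := fun t p => Finset.le_sup' _ (mem_univ p)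
  -- the constant K
  set K : ℝ := 1 + ∑ i : Fin d × Fin d, ∑ p ∈ Soff i.1 i.2,
      Real.sqrt (L i.1 p.1 * L i.2 p.2) with hKdef
  have hKi : ∀ i : Fin d × Fin d,
      ∑ p ∈ Soff i.1 i.2, Real.sqrt (L i.1 p.1 * L i.2 p.2) ≤ K - 1 := by
    intro i
    rw [hKdef]
    have := Finset.single_le_sum
      (f := fun j : Fin d × Fin d => ∑ p ∈ Soff j.1 j.2, Real.sqrt (L j.1 p.1 * L j.2 p.2))
      (fun j _ => Finset.sum_nonneg fun p _ => Real.sqrt_nonneg _) (mem_univ i)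
    linarith
  have hK1 : (1:ℝ) ≤ K := by
    rw [hKdef]
    have : (0:ℝ) ≤ ∑ i : Fin d × Fin d, ∑ p ∈ Soff i.1 i.2,
        Real.sqrt (L i.1 p.1 * L i.2 p.2) :=
      Finset.sum_nonneg fun j _ => Finset.sum_nonneg fun p _ => Real.sqrt_nonneg _
    linarith
  -- the one-sided differential inequality
  set gb : Fin d × Fin d → ℝ → ℝ := fun i t =>
    -γ i.1 i.2 * W t i + ∑ p ∈ Soff i.1 i.2,
      Real.sqrt (L i.1 p.1 * L i.2 p.2) * W t p with hgbdef
  have h0' : ∀ p : Fin d × Fin d, ρt 0 p = ‖ρ 0 p.1 p.2‖ := by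
    intro p
    have := h0 p.1 p.2
    rwa [Prod.mk.eta] at this
  have hkey : ∀ t (i : Fin d × Fin d), ∃ l,
      Filter.Tendsto (slope (fun s => W s i) t) (nhdsWithin t (Set.Ioi t)) (nhds l)
        ∧ l ≤ gb i t := by
    intro t i
    obtain ⟨x', y'⟩ := i
    set D := (A x' x' y' y' - (1/2) * (∑ z, (A z x' z x' + A z y' z y'))) * ρ t x' y'
        + ∑ p ∈ Soff x' y', A x' p.1 y' p.2 * ρ t p.1 p.2 with hDdef
    set vd := -γ x' y' * ρt t (x', y')
        + ∑ p ∈ Soff x' y', Real.sqrt (L x' p.1 * L y' p.2) * ρt t p with hvddef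
    have hρtt : HasDerivAt (fun s => ρt s (x', y')) vd t := hρt t x' y'
    have hmono : nhdsWithin t (Set.Ioi t) ≤ nhdsWithin t ({t}ᶜ) :=
      nhdsWithin_mono t fun z hz => Set.mem_compl_singleton_iff.2 (ne_of_gt hz)
    have hsum_off_le : ∑ p ∈ Soff x' y',
          ‖A x' p.1 y' p.2‖ * ‖ρ t p.1 p.2‖
        ≤ ∑ p ∈ Soff x' y', Real.sqrt (L x' p.1 * L y' p.2) * ‖ρ t p.1 p.2‖ := by
      refine Finset.sum_le_sum fun p hp => ?_
      simp only [hSoffdef, mem_filter] at hp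
      exact mul_le_mul_of_nonneg_right (hoffb _ _ _ _ (Ne.symm hp.2.2.1) (Ne.symm hp.2.2.2))
        (norm_nonneg _)
    have hsub : ∑ p ∈ Soff x' y', Real.sqrt (L x' p.1 * L y' p.2) * W t p
        = ∑ p ∈ Soff x' y', Real.sqrt (L x' p.1 * L y' p.2) * ‖ρ t p.1 p.2‖
          - ∑ p ∈ Soff x' y', Real.sqrt (L x' p.1 * L y' p.2) * ρt t p := by
      rw [← Finset.sum_sub_distrib]
      refine Finset.sum_congr rfl fun p _ => ?_
      rw [hWdef]
      ring
    have hgbi : gb (x', y') t = -γ x' y' * W t (x', y')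
        + ∑ p ∈ Soff x' y', Real.sqrt (L x' p.1 * L y' p.2) * W t p := by
      rw [hgbdef]
    by_cases hzero : ρ t x' y' = 0
    · refine ⟨‖D‖ - vd, ?_, ?_⟩
      · have h1 : Filter.Tendsto (slope (fun s => ρ s x' y') t)
            (nhdsWithin t {t}ᶜ) (nhds D) :=
          hasDerivAt_iff_tendsto_slope.1 (hρ' t x' y')
        have h2 : Filter.Tendsto (fun z => ‖slope (fun s => ρ s x' y') t z‖)
            (nhdsWithin t (Set.Ioi t)) (nhds (‖D‖)) :=
          (continuous_norm.tendsto D).comp (h1.mono_left hmono)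
        have h3 : Filter.Tendsto (slope (fun s => ‖ρ s x' y'‖) t)
            (nhdsWithin t (Set.Ioi t)) (nhds (‖D‖)) := by
          refine h2.congr' ?_
          filter_upwards [self_mem_nhdsWithin] with z hz
          have hzt : (0:ℝ) < z - t := sub_pos.2 hz
          rw [slope_def_module, slope_def_field, hzero, sub_zero, norm_zero, sub_zero,
            Complex.real_smul, norm_mul, Complex.norm_real, Real.norm_eq_abs,
            abs_of_pos (inv_pos.2 hzt), div_eq_inv_mul]
        have h4 : Filter.Tendsto (slope (fun s => ρt s (x', y')) t)
            (nhdsWithin t (Set.Ioi t)) (nhds vd) :=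
          (hasDerivAt_iff_tendsto_slope.1 hρtt).mono_left hmono
        refine (h3.sub h4).congr fun z => ?_
        rw [slope_def_field, slope_def_field, slope_def_field]
        simp only [hWdef]
        ring
      · have hDle : ‖D‖ ≤ ∑ p ∈ Soff x' y',
            Real.sqrt (L x' p.1 * L y' p.2) * ‖ρ t p.1 p.2‖ := by
          rw [hDdef, hzero, mul_zero, zero_add]
          refine le_trans (norm_sum_le _ _) (le_trans (le_of_eq ?_) hsum_off_le)
          exact Finset.sum_congr rfl fun p _ => norm_mul _ _
        have hWt : W t (x', y') = - ρt t (x', y') := by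
          simp [hWdef, hzero]
        rw [hgbi, hWt, hsub, hvddef]
        nlinarith [hDle]
    · have hua : 0 < ‖ρ t x' y'‖ := norm_pos_iff.2 hzero
      have hre : HasDerivAt (fun s => (ρ s x' y').re) D.re t := by
        have h := Complex.reCLM.hasFDerivAt.comp_hasDerivAt t (hρ' t x' y')
        rw [← hDdef] at h
        exact h
      have him : HasDerivAt (fun s => (ρ s x' y').im) D.im t := by
        have h := Complex.imCLM.hasFDerivAt.comp_hasDerivAt t (hρ' t x' y')
        rw [← hDdef] at h
        exact h
      set N : ℝ := (ρ t x' y').re * D.re + (ρ t x' y').im * D.im with hNdef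
      have hnsq : HasDerivAt (fun s => Complex.normSq (ρ s x' y')) (2 * N) t := by
        have h := (hre.mul hre).add (him.mul him)
        have e : (fun s => Complex.normSq (ρ s x' y'))
            = fun s => (ρ s x' y').re * (ρ s x' y').re + (ρ s x' y').im * (ρ s x' y').im :=
          funext fun s => Complex.normSq_apply _
        rw [e]
        refine h.congr_deriv ?_
        rw [hNdef]
        ring
      have hnsqne : Complex.normSq (ρ t x' y') ≠ 0 := by
        simpa [Complex.normSq_eq_zero] using hzero
      have hsqrt := (Real.hasDerivAt_sqrt hnsqne).comp t hnsq
      have habsd : HasDerivAt (fun s => ‖ρ s x' y'‖)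
          (N / ‖ρ t x' y'‖) t := by
        have e : (fun s => ‖ρ s x' y'‖)
            = (fun s => Real.sqrt s) ∘ (fun s => Complex.normSq (ρ s x' y')) :=
          funext fun s => Complex.norm_def _
        rw [e]
        refine hsqrt.congr_deriv ?_
        rw [Complex.norm_def]
        have hs : Real.sqrt (Complex.normSq (ρ t x' y')) ≠ 0 := by
          rw [← Complex.norm_def]
          exact ne_of_gt hua
        field_simp
      have hWd : HasDerivAt (fun s => W s (x', y'))
          (N / ‖ρ t x' y'‖ - vd) t := by
        have h := habsd.sub hρtt
        have e : (fun s => W s (x', y'))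
            = fun s => ‖ρ s x' y'‖ - ρt s (x', y') := by
          funext s
          simp [hWdef]
        rw [e]
        exact h
      refine ⟨N / ‖ρ t x' y'‖ - vd,
        (hasDerivAt_iff_tendsto_slope.1 hWd).mono_left hmono, ?_⟩
      have hcdre := hcd x' y'
      set S : ℝ := ∑ p ∈ Soff x' y',
          Real.sqrt (L x' p.1 * L y' p.2) * ‖ρ t p.1 p.2‖ with hSdef
      have hNle : N ≤ (A x' x' y' y' - (1/2) * (∑ z, (A z x' z x' + A z y' z y'))).re
            * ‖ρ t x' y'‖ ^ 2 + S * ‖ρ t x' y'‖ := by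
        have hNeq : N = ((starRingEnd ℂ) (ρ t x' y') * D).re := by
          rw [hNdef, Complex.mul_re, Complex.conj_re, Complex.conj_im]
          ring
        rw [hNeq, hDdef, mul_add, Complex.add_re]
        have hpart1 : ((starRingEnd ℂ) (ρ t x' y')
              * ((A x' x' y' y' - (1/2) * (∑ z, (A z x' z x' + A z y' z y'))) * ρ t x' y')).re
            = (A x' x' y' y' - (1/2) * (∑ z, (A z x' z x' + A z y' z y'))).re
              * ‖ρ t x' y'‖ ^ 2 := by
          have e1 : (starRingEnd ℂ) (ρ t x' y')
              * ((A x' x' y' y' - (1/2) * (∑ z, (A z x' z x' + A z y' z y'))) * ρ t x' y')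
              = ((‖ρ t x' y'‖ ^ 2 : ℝ) : ℂ)
                * (A x' x' y' y' - (1/2) * (∑ z, (A z x' z x' + A z y' z y'))) := by
            have : ((‖ρ t x' y'‖ ^ 2 : ℝ) : ℂ)
                = ρ t x' y' * (starRingEnd ℂ) (ρ t x' y') := by
              rw [Complex.mul_conj, Complex.sq_norm]
            rw [this]
            ring
          rw [e1, Complex.re_ofReal_mul]
          ring
        have hpart2 : ((starRingEnd ℂ) (ρ t x' y')
              * ∑ p ∈ Soff x' y', A x' p.1 y' p.2 * ρ t p.1 p.2).re
            ≤ S * ‖ρ t x' y'‖ := by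
          rw [Finset.mul_sum, Complex.re_sum]
          calc ∑ p ∈ Soff x' y',
                ((starRingEnd ℂ) (ρ t x' y') * (A x' p.1 y' p.2 * ρ t p.1 p.2)).re
              ≤ ∑ p ∈ Soff x' y',
                ‖A x' p.1 y' p.2‖ * ‖ρ t p.1 p.2‖
                  * ‖ρ t x' y'‖ := by
                refine Finset.sum_le_sum fun p hp => ?_
                refine le_trans (Complex.re_le_norm _) (le_of_eq ?_)
                rw [norm_mul, norm_mul, Complex.norm_conj]
                ring
            _ ≤ S * ‖ρ t x' y'‖ := by
                rw [hSdef, Finset.sum_mul]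
                refine Finset.sum_le_sum fun p hp => ?_
                refine mul_le_mul_of_nonneg_right ?_ hua.le
                simp only [hSoffdef, mem_filter] at hp
                exact mul_le_mul_of_nonneg_right
                  (hoffb _ _ _ _ (Ne.symm hp.2.2.1) (Ne.symm hp.2.2.2))
                  (norm_nonneg _)
        linarith
      have hdiv : N / ‖ρ t x' y'‖
          ≤ -γ x' y' * ‖ρ t x' y'‖ + S := by
        rw [div_le_iff₀ hua]
        have h5 : (A x' x' y' y' - (1/2) * (∑ z, (A z x' z x' + A z y' z y'))).re
              * ‖ρ t x' y'‖ ^ 2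
            ≤ -γ x' y' * ‖ρ t x' y'‖ ^ 2 := by
          have := sq_nonneg (‖ρ t x' y'‖)
          nlinarith [hcdre]
        nlinarith [hNle, h5]
      have hWt : W t (x', y') = ‖ρ t x' y'‖ - ρt t (x', y') := by
        simp [hWdef]
      rw [hgbi, hWt, hsub, hvddef]
      linarith [hdiv]
  -- Gronwall-type comparison
  have hach : ∀ t : ℝ, (univ.filter (fun i : Fin d × Fin d => W t i = m t)).Nonempty := by
    intro t
    obtain ⟨i, -, hi⟩ := Finset.exists_mem_eq_sup' hne (fun i => W t i)
    exact ⟨i, mem_filter.2 ⟨mem_univ _, hi.symm⟩⟩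
  have main : ∀ T, 0 ≤ T → ∀ ε, 0 < ε → ∀ x ∈ Set.Icc (0:ℝ) T,
      m x ≤ ε * Real.exp (K * x) := by
    intro T hT ε hε
    have hB : ∀ x : ℝ, HasDerivAt (fun s => ε * Real.exp (K * s))
        (K * (ε * Real.exp (K * x))) x := by
      intro x
      have h1 : HasDerivAt (fun s : ℝ => K * s) K x := by
        simpa using (hasDerivAt_id x).const_mul K
      have h2 := h1.exp.const_mul ε
      refine h2.congr_deriv ?_
      ring
    set f' : ℝ → ℝ := fun x => (univ.filter (fun i : Fin d × Fin d => W x i = m x)).sup'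
        (hach x) (fun i => gb i x) with hf'def
    have hW0 : ∀ i : Fin d × Fin d, W 0 i = 0 := by
      intro i
      simp [hWdef, h0' i]
    have hm00 : m 0 = 0 := by
      have e : m 0 = univ.sup' hne fun _ : Fin d × Fin d => (0:ℝ) := by
        rw [hmdef]
        exact Finset.sup'_congr hne rfl fun i _ => hW0 i
      rw [e, Finset.sup'_const]
    have hm0 : m 0 ≤ ε * Real.exp (K * 0) := by
      rw [hm00]
      positivity
    have hf' : ∀ x ∈ Set.Ico (0:ℝ) T, ∀ r, f' x < r →
        ∃ᶠ z in nhdsWithin x (Set.Ioi x), slope m x z < r := by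
      intro x _ r hr
      have hev : ∀ i : Fin d × Fin d, ∀ᶠ z in nhdsWithin x (Set.Ioi x),
          W z i < m x + r * (z - x) := by
        intro i
        by_cases hWi : W x i = m x
        · have hmem : i ∈ univ.filter (fun j : Fin d × Fin d => W x j = m x) :=
            mem_filter.2 ⟨mem_univ _, hWi⟩
          have hgb : gb i x ≤ f' x := by
            rw [hf'def]
            exact Finset.le_sup' (fun j => gb j x) hmem
          obtain ⟨l, hl, hlle⟩ := hkey x i
          have hlr : l < r := lt_of_le_of_lt (le_trans hlle hgb) hr
          filter_upwards [hl.eventually_lt_const hlr, self_mem_nhdsWithin] with z hz hz2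
          rw [slope_def_field] at hz
          have hzx : 0 < z - x := sub_pos.2 hz2
          rw [div_lt_iff₀ hzx] at hz
          linarith
        · have hWlt : W x i < m x := lt_of_le_of_ne (hWm x i) hWi
          have h1 : Filter.Tendsto (fun z => W z i) (nhdsWithin x (Set.Ioi x))
              (nhds (W x i)) := ((hWc i).tendsto x).mono_left nhdsWithin_le_nhds
          have h2 : Filter.Tendsto (fun z => m x + r * (z - x)) (nhdsWithin x (Set.Ioi x))
              (nhds (m x + r * (x - x))) := by
            apply Filter.Tendsto.mono_left _ nhdsWithin_le_nhds
            exact (continuous_const.add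
              (continuous_const.mul (continuous_id.sub continuous_const))).tendsto x
          rw [sub_self, mul_zero, add_zero] at h2
          exact h1.eventually_lt h2 hWlt
      apply Filter.Eventually.frequently
      have hall := Filter.eventually_all.2 hev
      filter_upwards [hall, self_mem_nhdsWithin] with z hz hz2
      have hzx : 0 < z - x := sub_pos.2 hz2
      rw [slope_def_field, div_lt_iff₀ hzx]
      have hmz : m z < m x + r * (z - x) := by
        rw [hmdef]
        exact (Finset.sup'_lt_iff hne).2 fun i _ => hz i
      linarith
    have hbound : ∀ x ∈ Set.Ico (0:ℝ) T, m x = ε * Real.exp (K * x) →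
        f' x < K * (ε * Real.exp (K * x)) := by
      intro x _ hmB
      have hmpos : 0 < m x := by
        rw [hmB]
        positivity
      rw [← hmB, hf'def]
      refine (Finset.sup'_lt_iff (hach x)).2 fun i hi => ?_
      obtain ⟨-, hWi⟩ := mem_filter.mp hi
      have h1 : -γ i.1 i.2 * W x i ≤ 0 := by
        rw [hWi]
        exact mul_nonpos_of_nonpos_of_nonneg (neg_nonpos.2 (hγ0 i.1 i.2)) hmpos.le
      have h2 : ∑ p ∈ Soff i.1 i.2, Real.sqrt (L i.1 p.1 * L i.2 p.2) * W x p
          ≤ (K - 1) * m x := by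
        calc ∑ p ∈ Soff i.1 i.2, Real.sqrt (L i.1 p.1 * L i.2 p.2) * W x p
            ≤ ∑ p ∈ Soff i.1 i.2, Real.sqrt (L i.1 p.1 * L i.2 p.2) * m x :=
              Finset.sum_le_sum fun p _ =>
                mul_le_mul_of_nonneg_left (hWm x p) (Real.sqrt_nonneg _)
          _ = (∑ p ∈ Soff i.1 i.2, Real.sqrt (L i.1 p.1 * L i.2 p.2)) * m x :=
              (Finset.sum_mul _ _ _).symm
          _ ≤ (K - 1) * m x := mul_le_mul_of_nonneg_right (hKi i) hmpos.le
      have h3 : gb i x ≤ (K - 1) * m x := by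
        rw [hgbdef]
        simp only []
        linarith
      have h4 : (K - 1) * m x < K * m x := by
        nlinarith [hmpos]
      linarith
    intro x hx
    exact image_le_of_liminf_slope_right_lt_deriv_boundary hmc.continuousOn hf' hm0 hB hbound hx
  -- conclusion
  intro t ht x' y'
  have hmle : m t ≤ 0 := by
    by_contra hcon
    push_neg at hcon
    have hE : 0 < Real.exp (K * t) := Real.exp_pos _
    have hh := main t ht (m t / (2 * Real.exp (K * t))) (by positivity) t ⟨ht, le_rfl⟩
    have he : m t / (2 * Real.exp (K * t)) * Real.exp (K * t) = m t / 2 := by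
      field_simp
    rw [he] at hh
    linarith
  have hWle : W t (x', y') ≤ m t := hWm t (x', y')
  have : ‖ρ t x' y'‖ - ρt t (x', y') ≤ 0 := by
    have e : W t (x', y') = ‖ρ t x' y'‖ - ρt t (x', y') := by
      simp [hWdef]
    linarith [e ▸ hWle]
  linarith
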